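/- If liminf_{t→∞} ‖z(t) + Y(t)‖ < +∞, then liminf_{t→∞} ‖z(t)‖ = 0 and limsup_{t→∞} ‖z(t)‖ < +∞. -/

import Mathlib

open Filter Set

-- closedness of sublevel-type sets under pointwise continuity
lemma isClosed_mem_on {g : ℝ → ℝ} {s : Set ℝ} (hs : IsClosed s)
    (hg : ∀ t ∈ s, ContinuousAt g t) {C : Set ℝ} (hC : IsClosed C) :
    IsClosed {t ∈ s | g t ∈ C} := by
  refine isClosed_of_closure_subset fun u hu => ?_
  have hus : u ∈ s := hs.closure_subset (closure_mono (Set.sep_subset _ _) hu)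
  refine ⟨hus, ?_⟩
  have h1 : (nhdsWithin u {t ∈ s | g t ∈ C}).NeBot :=
    mem_closure_iff_nhdsWithin_neBot.mp hu
  have h2 : Tendsto g (nhdsWithin u {t ∈ s | g t ∈ C}) (nhds (g u)) :=
    (hg u hus).continuousWithinAt
  exact hC.mem_of_tendsto h2
    (by filter_upwards [eventually_mem_nhdsWithin] with x hx using hx.2)

lemma trap {g g' : ℝ → ℝ} {t₀ t₁ a b : ℝ}
    (hab : a < b) (ht : t₀ ≤ t₁)
    (hg : ∀ t ∈ Set.Icc t₀ t₁, HasDerivAt g (g' t) t)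
    (hd : ∀ t ∈ Set.Icc t₀ t₁, a ≤ g t → g t ≤ b → g' t ≤ 0)
    (h0 : g t₀ ≤ a) : g t₁ ≤ b := by
  by_contra hb
  push_neg at hb
  have hcont : ∀ t ∈ Set.Icc t₀ t₁, ContinuousAt g t := fun t ht' => (hg t ht').continuousAt
  set S : Set ℝ := {t ∈ Set.Icc t₀ t₁ | g t ∈ Set.Ici b} with hSdef
  have hScl : IsClosed S := isClosed_mem_on isClosed_Icc hcont isClosed_Ici
  have hSne : S.Nonempty := ⟨t₁, Set.right_mem_Icc.2 ht, hb.le⟩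
  have hSbdd : BddBelow S := ⟨t₀, fun x hx => hx.1.1⟩
  set s₁ := sInf S with hs₁def
  have hs₁S : s₁ ∈ S := hScl.csInf_mem hSne hSbdd
  have hs₁Icc : s₁ ∈ Set.Icc t₀ t₁ := hs₁S.1
  set S2 : Set ℝ := {t ∈ Set.Icc t₀ s₁ | g t ∈ Set.Iic a} with hS2def
  have hS2cl : IsClosed S2 :=
    isClosed_mem_on isClosed_Icc
      (fun t ht' => hcont t ⟨ht'.1, ht'.2.trans hs₁Icc.2⟩) isClosed_Iic
  have hS2ne : S2.Nonempty := ⟨t₀, ⟨le_refl _, hs₁Icc.1⟩, h0⟩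
  have hS2bdd : BddAbove S2 := ⟨s₁, fun x hx => hx.1.2⟩
  set s₀ := sSup S2 with hs₀def
  have hs₀S2 : s₀ ∈ S2 := hS2cl.csSup_mem hS2ne hS2bdd
  have hs₀s₁ : s₀ ≤ s₁ := hs₀S2.1.2
  have hsub : Set.Icc s₀ s₁ ⊆ Set.Icc t₀ t₁ :=
    Set.Icc_subset_Icc hs₀S2.1.1 hs₁Icc.2
  have anti : AntitoneOn g (Set.Icc s₀ s₁) := by
    apply antitoneOn_of_deriv_nonpos (convex_Icc _ _)
    · exact fun t ht' => (hcont t (hsub ht')).continuousWithinAt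
    · rw [interior_Icc]
      exact fun t ht' =>
        ((hg t (hsub (Set.Ioo_subset_Icc_self ht'))).differentiableAt).differentiableWithinAt
    · rw [interior_Icc]
      intro t ht'
      have htIcc : t ∈ Set.Icc t₀ t₁ := hsub (Set.Ioo_subset_Icc_self ht')
      have hlb : a < g t := by
        by_contra hle
        push_neg at hle
        have : t ∈ S2 := ⟨⟨htIcc.1, ht'.2.le⟩, hle⟩
        exact absurd (le_csSup hS2bdd this) (not_le.2 ht'.1)
      have hub : g t < b := by
        by_contra hge
        push_neg at hge
        have : t ∈ S := ⟨htIcc, hge⟩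
        exact absurd (csInf_le hSbdd this) (not_le.2 ht'.2)
      rw [(hg t htIcc).deriv]
      exact hd t htIcc hlb.le hub.le
  have := anti (Set.left_mem_Icc.2 hs₀s₁) (Set.right_mem_Icc.2 hs₀s₁) hs₀s₁
  have hga : g s₀ ≤ a := hs₀S2.2
  have hgb : b ≤ g s₁ := hs₁S.2
  linarith

lemma decay {g g' : ℝ → ℝ} {T δ : ℝ} (hδ : 0 < δ)
    (hg : ∀ t, T ≤ t → HasDerivAt g (g' t) t)
    (hd : ∀ t, T ≤ t → g' t ≤ -δ)
    (hpos : ∀ t, T ≤ t → 0 ≤ g t) : False := by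
  have hgT : 0 ≤ g T := hpos T le_rfl
  set t₁ := T + (g T + 1) / δ with ht₁def
  have hT1 : T ≤ t₁ := by
    have : 0 < (g T + 1) / δ := div_pos (by linarith) hδ
    rw [ht₁def]; linarith
  have anti : AntitoneOn (fun t => g t + δ * t) (Set.Icc T t₁) := by
    apply antitoneOn_of_deriv_nonpos (convex_Icc _ _)
    · intro t ht'
      exact (((hg t ht'.1).add ((hasDerivAt_id t).const_mul δ)).continuousAt).continuousWithinAt
    · rw [interior_Icc]
      intro t ht'
      exact (((hg t ht'.1.le).add ((hasDerivAt_id t).const_mul δ)).differentiableAt).differentiableWithinAt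
    · rw [interior_Icc]
      intro t ht'
      have hder : HasDerivAt (fun t => g t + δ * t) (g' t + δ * 1) t :=
        (hg t ht'.1.le).add ((hasDerivAt_id t).const_mul δ)
      rw [hder.deriv]
      have := hd t ht'.1.le
      linarith
  have h1 := anti (Set.left_mem_Icc.2 hT1) (Set.right_mem_Icc.2 hT1) hT1
  have h2 : 0 ≤ g t₁ := hpos t₁ hT1
  have h3 : δ * t₁ = δ * T + (g T + 1) := by
    rw [ht₁def]; field_simp
  simp only at h1
  linarith

open Filter Set

local notation "⟪" x ", " y "⟫" => @inner ℝ _ _ x y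

lemma barrier (d : ℕ) (hd : 1 ≤ d)
    (f : EuclideanSpace ℝ (Fin d) → EuclideanSpace ℝ (Fin d)) (hf : Continuous f)
    (hdiss : ∀ x : EuclideanSpace ℝ (Fin d), x ≠ 0 → 0 < (inner ℝ x (f x) : ℝ))
    (Y z : ℝ → EuclideanSpace ℝ (Fin d)) (hYlim : Tendsto Y atTop (nhds 0))
    {a b : ℝ} (ha : 0 < a) (hab : a ≤ b) :
    ∃ δ > 0, ∀ᶠ t in atTop,
      a ≤ ‖z t‖ → ‖z t‖ ≤ b →
      2 * (inner ℝ (z t) (-f (z t + Y t) + Y t) : ℝ) ≤ -δ := by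
  set K : Set (EuclideanSpace ℝ (Fin d)) :=
    Metric.closedBall 0 (b + 1) \ Metric.ball 0 (a / 2) with hKdef
  have hKc : IsCompact K := (isCompact_closedBall _ _).diff Metric.isOpen_ball
  have hKne : K.Nonempty := by
    refine ⟨EuclideanSpace.single (⟨0, hd⟩ : Fin d) (a / 2), ?_, ?_⟩
    · rw [Metric.mem_closedBall, dist_zero_right, EuclideanSpace.norm_single]
      rw [Real.norm_eq_abs, abs_of_nonneg (by linarith)]
      linarith
    · rw [Metric.mem_ball, dist_zero_right, EuclideanSpace.norm_single]
      rw [Real.norm_eq_abs, abs_of_nonneg (by linarith)]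
      exact lt_irrefl _
  have hφ : Continuous fun x : EuclideanSpace ℝ (Fin d) => (inner ℝ x (f x) : ℝ) :=
    continuous_id.inner hf
  obtain ⟨x₀, hx₀K, hmin⟩ := hKc.exists_isMinOn hKne hφ.continuousOn
  have hKnorm : ∀ x ∈ K, a / 2 ≤ ‖x‖ ∧ ‖x‖ ≤ b + 1 := by
    intro x hx
    obtain ⟨h1, h2⟩ := hx
    rw [Metric.mem_closedBall, dist_zero_right] at h1
    rw [Metric.mem_ball, dist_zero_right, not_lt] at h2
    exact ⟨h2, h1⟩
  have hx₀ne : x₀ ≠ 0 := by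
    intro h
    have := (hKnorm x₀ hx₀K).1
    rw [h, norm_zero] at this
    linarith
  set δ := (inner ℝ x₀ (f x₀) : ℝ) with hδdef
  have hδ : 0 < δ := hdiss x₀ hx₀ne
  obtain ⟨C, hC⟩ := hKc.exists_bound_of_continuousOn hf.continuousOn
  have hC0 : 0 ≤ C := le_trans (norm_nonneg _) (hC x₀ hx₀K)
  have hD : 0 < C + b + 1 := by linarith
  set η := min 1 (min (a / 2) (δ / (2 * (C + b + 1)))) with hηdef
  have hη : 0 < η := by
    refine lt_min one_pos (lt_min (by linarith) ?_)
    positivity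
  have hYev : ∀ᶠ t in atTop, ‖Y t‖ < η := by
    have := Metric.tendsto_nhds.mp hYlim η hη
    filter_upwards [this] with t ht
    rwa [dist_zero_right] at ht
  refine ⟨δ, hδ, ?_⟩
  filter_upwards [hYev] with t hYt h1 h2
  set x := z t + Y t with hxdef
  have hη1 : η ≤ 1 := min_le_left _ _
  have hηa : η ≤ a / 2 := le_trans (min_le_right _ _) (min_le_left _ _)
  have hηδ : η ≤ δ / (2 * (C + b + 1)) := le_trans (min_le_right _ _) (min_le_right _ _)
  have hzx : z t = x - Y t := by rw [hxdef]; abel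
  have hxub : ‖x‖ ≤ b + 1 := by
    calc ‖x‖ ≤ ‖z t‖ + ‖Y t‖ := norm_add_le _ _
    _ ≤ b + 1 := by linarith
  have hxlb : a / 2 ≤ ‖x‖ := by
    have : ‖z t‖ ≤ ‖x‖ + ‖Y t‖ := by
      rw [hzx]; exact norm_sub_le _ _
    linarith
  have hxK : x ∈ K := by
    constructor
    · rw [Metric.mem_closedBall, dist_zero_right]; exact hxub
    · rw [Metric.mem_ball, dist_zero_right, not_lt]; exact hxlb
  have hδx : δ ≤ (inner ℝ x (f x) : ℝ) := hmin hxK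
  have hfx : ‖f x‖ ≤ C := hC x hxK
  have hsplit : (inner ℝ (z t) (-f x + Y t) : ℝ)
      = -(inner ℝ x (f x) : ℝ) + (inner ℝ (Y t) (f x) : ℝ) + (inner ℝ (z t) (Y t) : ℝ) := by
    rw [inner_add_right, inner_neg_right, hzx, inner_sub_left]
    ring
  have hb1 : (inner ℝ (Y t) (f x) : ℝ) ≤ η * C := by
    calc (inner ℝ (Y t) (f x) : ℝ) ≤ ‖Y t‖ * ‖f x‖ := real_inner_le_norm _ _
    _ ≤ η * C := by
        apply mul_le_mul hYt.le hfx (norm_nonneg _) hη.le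
  have hb2 : (inner ℝ (z t) (Y t) : ℝ) ≤ b * η := by
    calc (inner ℝ (z t) (Y t) : ℝ) ≤ ‖z t‖ * ‖Y t‖ := real_inner_le_norm _ _
    _ ≤ b * η := by
        apply mul_le_mul h2 hYt.le (norm_nonneg _) (by linarith)
  have hkey : 2 * η * (C + b + 1) ≤ δ := by
    calc 2 * η * (C + b + 1) = 2 * (η * (C + b + 1)) := by ring
    _ ≤ 2 * (δ / (2 * (C + b + 1)) * (C + b + 1)) := by
        apply mul_le_mul_of_nonneg_left _ (by norm_num)
        exact mul_le_mul_of_nonneg_right hηδ hD.le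
    _ = δ := by field_simp
  calc 2 * (inner ℝ (z t) (-f x + Y t) : ℝ)
      = 2 * (-(inner ℝ x (f x) : ℝ) + (inner ℝ (Y t) (f x) : ℝ) + (inner ℝ (z t) (Y t) : ℝ)) := by
        rw [hsplit]
    _ ≤ 2 * (-δ + η * C + b * η) := by nlinarith
    _ ≤ -δ := by nlinarith [hη.le, hC0]
theorem stmt_7 (d : ℕ) (hd : 1 ≤ d)
    (f : EuclideanSpace ℝ (Fin d) → EuclideanSpace ℝ (Fin d)) (hf : Continuous f)
    (hf0 : f 0 = 0)
    (hdiss : ∀ x : EuclideanSpace ℝ (Fin d), x ≠ 0 → 0 < (inner ℝ x (f x) : ℝ))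
    (Y z : ℝ → EuclideanSpace ℝ (Fin d))
    (hY : ContinuousOn Y (Set.Ici 0)) (hYlim : Tendsto Y atTop (nhds 0))
    (hz : ∀ t : ℝ, 0 ≤ t → HasDerivAt z (-f (z t + Y t) + Y t) t)
    (hliminf : liminf (fun t : ℝ => (‖z t + Y t‖₊ : ENNReal)) atTop < ⊤) :
    liminf (fun t : ℝ => (‖z t‖₊ : ENNReal)) atTop = 0 ∧
    limsup (fun t : ℝ => (‖z t‖₊ : ENNReal)) atTop < ⊤ := by
  -- derivative of the squared norm
  have hg : ∀ t : ℝ, 0 ≤ t → HasDerivAt (fun s => ‖z s‖ ^ 2)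
      (2 * (inner ℝ (z t) (-f (z t + Y t) + Y t) : ℝ)) t := by
    intro t ht
    have h1 := HasDerivAt.inner (𝕜 := ℝ) (hz t ht) (hz t ht)
    simp only [real_inner_self_eq_norm_sq] at h1
    have h2 : (inner ℝ (z t) (-f (z t + Y t) + Y t) : ℝ)
        + (inner ℝ (-f (z t + Y t) + Y t) (z t) : ℝ)
        = 2 * (inner ℝ (z t) (-f (z t + Y t) + Y t) : ℝ) := by
      rw [real_inner_comm (-f (z t + Y t) + Y t) (z t)]; ring
    rwa [h2] at h1
  set l := liminf (fun t : ℝ => (‖z t + Y t‖₊ : ENNReal)) atTop with hldef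
  have hlt : l < l + 1 := ENNReal.lt_add_right hliminf.ne one_ne_zero
  have hfreq : ∃ᶠ t in atTop, (‖z t + Y t‖₊ : ENNReal) < l + 1 :=
    frequently_lt_of_liminf_lt (by isBoundedDefault) hlt
  set R := (l + 1).toReal with hRdef
  have hR0 : 0 ≤ R := ENNReal.toReal_nonneg
  have htop : l + 1 ≠ ⊤ := by
    simp [ENNReal.add_eq_top, hliminf.ne]
  have hfreqR : ∃ᶠ t in atTop, ‖z t + Y t‖ ≤ R := by
    apply hfreq.mono; intro t ht
    have := ENNReal.toReal_mono htop ht.le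
    simpa using this
  have hY1 : ∀ᶠ t in atTop, ‖Y t‖ < 1 := by
    have := Metric.tendsto_nhds.mp hYlim 1 one_pos
    filter_upwards [this] with t ht
    rwa [dist_zero_right] at ht
  have hfreq2 : ∃ᶠ t in atTop, ‖z t‖ ≤ R + 1 := by
    apply (hfreqR.and_eventually hY1).mono
    rintro t ⟨h1, h2⟩
    have h3 : ‖z t‖ ≤ ‖z t + Y t‖ + ‖Y t‖ := by
      calc ‖z t‖ = ‖(z t + Y t) - Y t‖ := by rw [add_sub_cancel_right]
      _ ≤ ‖z t + Y t‖ + ‖Y t‖ := norm_sub_le _ _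
    linarith
  obtain ⟨δ₁, hδ₁, hbar1⟩ := barrier d hd f hf hdiss Y z hYlim
    (a := R + 2) (b := R + 3) (by linarith) (by linarith)
  obtain ⟨T, hT⟩ := eventually_atTop.mp (hbar1.and (eventually_ge_atTop (0 : ℝ)))
  obtain ⟨t₀, ht₀, ht₀T⟩ := (hfreq2.and_eventually (eventually_ge_atTop T)).exists
  have ht₀0 : (0 : ℝ) ≤ t₀ := (hT t₀ ht₀T).2
  -- the trapping region: after t₀ the norm stays below R + 3
  have htrap : ∀ t₁, t₀ ≤ t₁ → ‖z t₁‖ ≤ R + 3 := by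
    intro t₁ h
    have key : ‖z t₁‖ ^ 2 ≤ (R + 3) ^ 2 := by
      refine trap (g := fun s => ‖z s‖ ^ 2)
        (g' := fun t => 2 * (inner ℝ (z t) (-f (z t + Y t) + Y t) : ℝ))
        (a := (R + 2) ^ 2) (b := (R + 3) ^ 2) (by nlinarith) h
        (fun t ht' => hg t (le_trans ht₀0 ht'.1)) ?_
        (show ‖z t₀‖ ^ 2 ≤ (R + 2) ^ 2 by
          have h5 := mul_self_le_mul_self (norm_nonneg (z t₀)) ht₀
          nlinarith)
      intro t ht' hA hB
      have hA' : (R + 2) ^ 2 ≤ ‖z t‖ ^ 2 := hA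
      have hB' : ‖z t‖ ^ 2 ≤ (R + 3) ^ 2 := hB
      have hPt := (hT t (le_trans ht₀T ht'.1)).1
      have hzl : R + 2 ≤ ‖z t‖ := by nlinarith [norm_nonneg (z t)]
      have hzu : ‖z t‖ ≤ R + 3 := by nlinarith [norm_nonneg (z t)]
      show 2 * (inner ℝ (z t) (-f (z t + Y t) + Y t) : ℝ) ≤ 0
      linarith [hPt hzl hzu]
    nlinarith [norm_nonneg (z t₁)]
  have hevb : ∀ᶠ t in atTop, ‖z t‖ ≤ R + 3 := eventually_atTop.2 ⟨t₀, htrap⟩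
  have hlimsup : limsup (fun t : ℝ => (‖z t‖₊ : ENNReal)) atTop < ⊤ := by
    have hle : limsup (fun t : ℝ => (‖z t‖₊ : ENNReal)) atTop ≤ (‖R + 3‖₊ : ENNReal) := by
      apply limsup_le_of_le (by isBoundedDefault)
      filter_upwards [hevb] with t ht
      have h' : ‖z t‖ ≤ ‖R + 3‖ := by
        rw [Real.norm_eq_abs, abs_of_nonneg (by linarith)]; exact ht
      exact ENNReal.coe_le_coe.2 (by rwa [← NNReal.coe_le_coe, coe_nnnorm, coe_nnnorm])
    exact lt_of_le_of_lt hle ENNReal.coe_lt_top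
  refine ⟨?_, hlimsup⟩
  by_contra h0
  have hpos : 0 < liminf (fun t : ℝ => (‖z t‖₊ : ENNReal)) atTop := pos_iff_ne_zero.2 h0
  set m := min (liminf (fun t : ℝ => (‖z t‖₊ : ENNReal)) atTop) 1 with hmdef
  have hm0 : m ≠ 0 := ne_of_gt (lt_min hpos one_pos)
  have hmtop : m ≠ ⊤ := ne_top_of_le_ne_top ENNReal.one_ne_top (min_le_right _ _)
  have hhalf : m / 2 < liminf (fun t : ℝ => (‖z t‖₊ : ENNReal)) atTop :=
    lt_of_lt_of_le (ENNReal.half_lt_self hm0 hmtop) (min_le_left _ _)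
  have hev2 : ∀ᶠ t in atTop, m / 2 < (‖z t‖₊ : ENNReal) :=
    eventually_lt_of_lt_liminf hhalf
  set e := (m / 2).toReal with hedef
  have hhtop : m / 2 ≠ ⊤ := ne_top_of_le_ne_top hmtop ENNReal.half_le_self
  have hh0 : m / 2 ≠ 0 := by
    simp only [ne_eq, ENNReal.div_eq_zero_iff]
    push_neg
    exact ⟨hm0, ENNReal.ofNat_ne_top⟩
  have he : 0 < e := ENNReal.toReal_pos hh0 hhtop
  have hev2' : ∀ᶠ t in atTop, e ≤ ‖z t‖ := by
    filter_upwards [hev2] with t ht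
    have := ENNReal.toReal_mono ENNReal.coe_ne_top ht.le
    simpa [hedef, ENNReal.toReal_div] using this
  obtain ⟨δ₂, hδ₂, hbar2⟩ := barrier d hd f hf hdiss Y z hYlim
    (a := min e (R + 3)) (b := R + 3) (lt_min he (by linarith)) (min_le_right _ _)
  have hev3 : ∀ᶠ t in atTop,
      0 ≤ t ∧ 2 * (inner ℝ (z t) (-f (z t + Y t) + Y t) : ℝ) ≤ -δ₂ := by
    filter_upwards [hev2', hevb, hbar2, eventually_ge_atTop (0 : ℝ)] with t h1 h2 h3 h4
    exact ⟨h4, h3 (le_trans (min_le_left _ _) h1) h2⟩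
  obtain ⟨T₂, hT₂⟩ := eventually_atTop.mp hev3
  exact decay hδ₂ (fun t ht => hg t (hT₂ t ht).1) (fun t ht => (hT₂ t ht).2)
    (fun t _ => sq_nonneg _)
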